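/- For any graph G on n vertices, ϑ(G)·ϑ(Ḡ) ≥ n, where ϑ is the Lovász theta function. -/

import Mathlib

open scoped Classical

open Matrix Filter

open scoped MatrixOrder Matrix in
theorem psd_eq_conjTranspose_mul_self' {n : Type} [Fintype n] {A : Matrix n n ℝ}
    (hA : A.PosSemidef) : ∃ B : Matrix n n ℝ, A = Bᴴ * B := by
  classical
  obtain ⟨B, rfl⟩ := CStarAlgebra.nonneg_iff_eq_star_mul_self.mp hA.nonneg
  exact ⟨B, rfl⟩

attribute [local instance] Matrix.normedAddCommGroup Matrix.normedSpace

namespace LovaszThetaProof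

variable {V : Type} [Fintype V]

def Feas (G : SimpleGraph V) : Set ℝ :=
  {t | ∃ X : Matrix V V ℝ, X.PosSemidef ∧ X.trace = 1 ∧
    (∀ i j, G.Adj i j → X i j = 0) ∧ t = ∑ i, ∑ j, X i j}

lemma sum_option' (f : Option V → ℝ) : ∑ x : Option V, f x = f none + ∑ x : V, f (some x) := by
  simp [← Finset.sum_insertNone]

lemma quad_expand (S : Matrix V V ℝ) (x : V → ℝ) :
    x ⬝ᵥ S *ᵥ x = ∑ i, ∑ j, x i * S i j * x j := by
  simp [dotProduct, Matrix.mulVec, Finset.mul_sum, mul_assoc]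

lemma psd_of_quad {W : Type} [Fintype W] (S : Matrix W W ℝ) (hsym : ∀ i j, S j i = S i j)
    (hq : ∀ x : W → ℝ, 0 ≤ ∑ i, ∑ j, x i * S i j * x j) : S.PosSemidef := by
  refine Matrix.PosSemidef.of_dotProduct_mulVec_nonneg ?_ ?_
  · ext i j
    simp [Matrix.conjTranspose_apply, hsym i j]
  · intro x
    have := hq x
    rwa [show star x = x from rfl, quad_expand]

lemma psd_quad {W : Type} [Fintype W] {S : Matrix W W ℝ} (h : S.PosSemidef) (x : W → ℝ) :
    0 ≤ ∑ i, ∑ j, x i * S i j * x j := by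
  have := h.dotProduct_mulVec_nonneg x
  rwa [show star x = x from rfl, quad_expand] at this

lemma psd_sym {W : Type} [Fintype W] {S : Matrix W W ℝ} (h : S.PosSemidef) (i j : W) : S j i = S i j := by
  have := congrFun (congrFun h.1 i) j
  simpa [Matrix.conjTranspose_apply] using this

lemma sum4_comm (f : V → V → V → V → ℝ) :
    ∑ i, ∑ j, ∑ k, ∑ l, f i j k l = ∑ k, ∑ l, ∑ i, ∑ j, f i j k l := by
  calc ∑ i, ∑ j, ∑ k, ∑ l, f i j k l
      = ∑ i, ∑ k, ∑ j, ∑ l, f i j k l :=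
        Finset.sum_congr rfl fun i _ => Finset.sum_comm
    _ = ∑ k, ∑ i, ∑ j, ∑ l, f i j k l := Finset.sum_comm
    _ = ∑ k, ∑ i, ∑ l, ∑ j, f i j k l :=
        Finset.sum_congr rfl fun k _ => Finset.sum_congr rfl fun i _ => Finset.sum_comm
    _ = ∑ k, ∑ l, ∑ i, ∑ j, f i j k l :=
        Finset.sum_congr rfl fun k _ => Finset.sum_comm

/-- Schur product theorem. -/
lemma hadamard_psd {A B : Matrix V V ℝ} (hA : A.PosSemidef) (hB : B.PosSemidef) :
    (A ⊙ B).PosSemidef := by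
  obtain ⟨C, hC⟩ := psd_eq_conjTranspose_mul_self' hA
  obtain ⟨D, hD⟩ := psd_eq_conjTranspose_mul_self' hB
  have hAe : ∀ i j, A i j = ∑ k, C k i * C k j := by
    intro i j; rw [hC]; simp [Matrix.mul_apply, Matrix.conjTranspose_apply]
  have hBe : ∀ i j, B i j = ∑ k, D k i * D k j := by
    intro i j; rw [hD]; simp [Matrix.mul_apply, Matrix.conjTranspose_apply]
  apply psd_of_quad
  · intro i j; simp [Matrix.hadamard_apply, psd_sym hA, psd_sym hB]
  · intro x
    have e1 : ∀ i j, x i * (A ⊙ B) i j * x j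
        = ∑ k, ∑ l, (x i * C k i * D l i) * (x j * C k j * D l j) := by
      intro i j
      rw [Matrix.hadamard_apply, hAe, hBe, Fintype.sum_mul_sum]
      rw [Finset.mul_sum, Finset.sum_mul]
      refine Finset.sum_congr rfl fun k _ => ?_
      rw [Finset.mul_sum, Finset.sum_mul]
      refine Finset.sum_congr rfl fun l _ => ?_
      ring
    calc ∑ i, ∑ j, x i * (A ⊙ B) i j * x j
        = ∑ i, ∑ j, ∑ k, ∑ l, (x i * C k i * D l i) * (x j * C k j * D l j) :=
          Finset.sum_congr rfl fun i _ => Finset.sum_congr rfl fun j _ => e1 i j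
      _ = ∑ k, ∑ l, ∑ i, ∑ j, (x i * C k i * D l i) * (x j * C k j * D l j) := sum4_comm _
      _ = ∑ k, ∑ l, (∑ i, x i * C k i * D l i) * (∑ j, x j * C k j * D l j) :=
          Finset.sum_congr rfl fun k _ => Finset.sum_congr rfl fun l _ =>
            (Fintype.sum_mul_sum _ _).symm
      _ ≥ 0 := Finset.sum_nonneg fun k _ => Finset.sum_nonneg fun l _ => mul_self_nonneg _

lemma psd_diag {S : Matrix V V ℝ} (h : S.PosSemidef) (i : V) : 0 ≤ S i i := by
  have := psd_quad h (fun k => if k = i then 1 else 0)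
  simpa [Finset.sum_ite_eq'] using this


lemma quad_two {S : Matrix V V ℝ} {i j : V} (hij : i ≠ j) (c : ℝ) :
    (∑ k, ∑ l, (fun k => if k = i then 1 else if k = j then c else 0 : V → ℝ) k * S k l *
      (fun k => if k = i then 1 else if k = j then c else 0 : V → ℝ) l)
    = S i i + c * S i j + c * S j i + c^2 * S j j := by
  set x : V → ℝ := fun k => if k = i then 1 else if k = j then c else 0 with hx
  have hsum : ∀ g : V → ℝ, (∀ k, k ≠ i → k ≠ j → g k = 0) → ∑ k, g k = g i + g j := by
    intro g hg
    exact Fintype.sum_eq_add i j hij (fun k hk => hg k hk.1 hk.2)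
  have inner : ∀ k, ∑ l, x k * S k l * x l = x k * S k i * 1 + x k * S k j * c := by
    intro k
    rw [hsum (fun l => x k * S k l * x l) (fun l h1 h2 => by simp [hx, h1, h2])]
    simp [hx, hij, if_neg (Ne.symm hij)]
  rw [hsum _ (fun k h1 h2 => by rw [inner k]; simp [hx, h1, h2])]
  rw [inner i, inner j]
  simp [hx, hij, if_neg (Ne.symm hij)]
  ring

lemma psd_entry_bound {S : Matrix V V ℝ} (h : S.PosSemidef) (i j : V) :
    2 * |S i j| ≤ S i i + S j j := by
  rcases eq_or_ne i j with rfl | hij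
  · rw [abs_of_nonneg (psd_diag h i)]; ring_nf; rfl
  · have hplus := psd_quad h (fun k => if k = i then 1 else if k = j then 1 else 0)
    have hminus := psd_quad h (fun k => if k = i then 1 else if k = j then -1 else 0)
    rw [quad_two hij 1] at hplus
    rw [quad_two hij (-1)] at hminus
    have hs := psd_sym h i j
    rcases abs_cases (S i j) with ⟨he, _⟩ | ⟨he, _⟩ <;> rw [he] <;> nlinarith


/-- The bordered matrix `[[S + J, r·1],[r·1ᵀ, r²]]` (indexed by `Option V`). -/
noncomputable def border (S : Matrix V V ℝ) (r : ℝ) : Matrix (Option V) (Option V) ℝ :=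
  fun i j => match i, j with
  | some i, some j => S i j + 1
  | some _, none => r
  | none, some _ => r
  | none, none => r ^ 2

lemma border_psd (S : Matrix V V ℝ) (hS : S.PosSemidef) (r : ℝ) : (border S r).PosSemidef := by
  apply psd_of_quad
  · intro i j
    cases i <;> cases j <;> simp [border, psd_sym hS]
  · intro x
    have inner_none : ∑ j : Option V, x none * border S r none j * x j
        = x none * r ^ 2 * x none + ∑ j : V, x none * r * x (some j) := by
      rw [sum_option' (fun j => x none * border S r none j * x j)]
      simp [border]
    have inner_some : ∀ i : V, ∑ j : Option V, x (some i) * border S r (some i) j * x j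
        = x (some i) * r * x none + ∑ j : V, x (some i) * (S i j + 1) * x (some j) := by
      intro i
      rw [sum_option' (fun j => x (some i) * border S r (some i) j * x j)]
      simp [border]
    rw [sum_option' (fun i => ∑ j, x i * border S r i j * x j)]
    simp only [inner_none, inner_some]
    have inner : ∀ i : V, ∑ j : V, x (some i) * (S i j + 1) * x (some j)
        = (∑ j : V, x (some i) * S i j * x (some j)) + x (some i) * ∑ j : V, x (some j) := by
      intro i
      rw [Finset.mul_sum, ← Finset.sum_add_distrib]
      exact Finset.sum_congr rfl fun j _ => by ring
    simp only [inner]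
    simp only [Finset.sum_add_distrib, ← Finset.mul_sum, ← Finset.sum_mul]
    have hq := psd_quad hS (fun i => x (some i))
    nlinarith [sq_nonneg (r * x none + ∑ j : V, x (some j))]



lemma one_mem_feas [Nonempty V] (G : SimpleGraph V) : (1:ℝ) ∈ Feas G := by
  have hn : (0:ℝ) < (Fintype.card V : ℝ) := by
    exact_mod_cast Fintype.card_pos
  refine ⟨(Fintype.card V : ℝ)⁻¹ • (1 : Matrix V V ℝ), ?_, ?_, ?_, ?_⟩
  · apply psd_of_quad
    · intro i j
      simp [Matrix.smul_apply, Matrix.one_apply, eq_comm]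
    · intro x
      have : ∀ i : V, ∑ j, x i * ((Fintype.card V : ℝ)⁻¹ • (1 : Matrix V V ℝ)) i j * x j
          = (Fintype.card V : ℝ)⁻¹ * x i ^ 2 := by
        intro i
        rw [Finset.sum_eq_single_of_mem i (Finset.mem_univ i)]
        · simp [Matrix.smul_apply, Matrix.one_apply]; ring
        · intro j _ hji
          simp [Matrix.smul_apply, Matrix.one_apply, Ne.symm hji]
      rw [Finset.sum_congr rfl fun i _ => this i]
      exact Finset.sum_nonneg fun i _ => by positivity
  · simp [Matrix.trace, Matrix.diag, Matrix.smul_apply, Matrix.one_apply, Finset.sum_const,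
      Finset.card_univ, nsmul_eq_mul]
  · intro i j hadj
    simp [Matrix.smul_apply, Matrix.one_apply, G.ne_of_adj hadj]
  · have : ∀ i : V, ∑ j, ((Fintype.card V : ℝ)⁻¹ • (1 : Matrix V V ℝ)) i j
        = (Fintype.card V : ℝ)⁻¹ := by
      intro i
      rw [Finset.sum_eq_single_of_mem i (Finset.mem_univ i)]
      · simp [Matrix.smul_apply, Matrix.one_apply]
      · intro j _ hji
        simp [Matrix.smul_apply, Matrix.one_apply, Ne.symm hji]
    rw [Finset.sum_congr rfl fun i _ => this i, Finset.sum_const, Finset.card_univ, nsmul_eq_mul]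
    field_simp

lemma feas_le_card (G : SimpleGraph V) {v : ℝ} (hv : v ∈ Feas G) : v ≤ (Fintype.card V : ℝ) := by
  obtain ⟨X, hpsd, htr, -, hval⟩ := hv
  obtain ⟨B, hB⟩ := psd_eq_conjTranspose_mul_self' hpsd
  have hXe : ∀ i j, X i j = ∑ k, B k i * B k j := by
    intro i j; rw [hB]; simp [Matrix.mul_apply, Matrix.conjTranspose_apply]
  have hval' : v = ∑ k, (∑ i, B k i) ^ 2 := by
    rw [hval]
    calc ∑ i, ∑ j, X i j = ∑ i, ∑ j, ∑ k, B k i * B k j :=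
          Finset.sum_congr rfl fun i _ => Finset.sum_congr rfl fun j _ => hXe i j
      _ = ∑ i, ∑ k, ∑ j, B k i * B k j :=
          Finset.sum_congr rfl fun i _ => Finset.sum_comm
      _ = ∑ k, ∑ i, ∑ j, B k i * B k j := Finset.sum_comm
      _ = ∑ k, (∑ i, B k i) ^ 2 := by
          refine Finset.sum_congr rfl fun k _ => ?_
          rw [sq, Fintype.sum_mul_sum]
  have htr' : ∑ k, ∑ i, B k i ^ 2 = 1 := by
    have hdiag : ∀ i, X.diag i = ∑ k, B k i ^ 2 := by
      intro i
      rw [Matrix.diag_apply, hXe i i]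
      exact Finset.sum_congr rfl fun k _ => (sq (B k i)).symm
    rw [← htr, Matrix.trace, Finset.sum_congr rfl fun i _ => hdiag i, Finset.sum_comm]
  have hcs : ∀ k, (∑ i, B k i) ^ 2 ≤ (Fintype.card V : ℝ) * ∑ i, B k i ^ 2 := by
    intro k
    have := sq_sum_le_card_mul_sum_sq (s := (Finset.univ : Finset V)) (f := fun i => B k i)
    simpa [Finset.card_univ] using this
  calc v = ∑ k, (∑ i, B k i) ^ 2 := hval'
    _ ≤ ∑ k, (Fintype.card V : ℝ) * ∑ i, B k i ^ 2 :=
        Finset.sum_le_sum fun k _ => hcs k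
    _ = (Fintype.card V : ℝ) * ∑ k, ∑ i, B k i ^ 2 := by rw [← Finset.mul_sum]
    _ = (Fintype.card V : ℝ) := by rw [htr', mul_one]



lemma psd_smul {S : Matrix V V ℝ} (h : S.PosSemidef) {c : ℝ} (hc : 0 ≤ c) :
    (c • S).PosSemidef := by
  apply psd_of_quad
  · intro i j; simp [Matrix.smul_apply, psd_sym h i j]
  · intro x
    have e : ∀ i j, x i * (c • S) i j * x j = c * (x i * S i j * x j) := by
      intro i j; simp [Matrix.smul_apply]; ring
    calc (0:ℝ) ≤ c * ∑ i, ∑ j, x i * S i j * x j := mul_nonneg hc (psd_quad h x)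
      _ = ∑ i, ∑ j, x i * (c • S) i j * x j := by
          rw [Finset.mul_sum]
          refine Finset.sum_congr rfl fun i _ => ?_
          rw [Finset.mul_sum]
          exact Finset.sum_congr rfl fun j _ => (e i j).symm

lemma vecMulVec_psd (x : V → ℝ) : (Matrix.vecMulVec x x).PosSemidef := by
  apply psd_of_quad
  · intro i j; simp [Matrix.vecMulVec_apply]; ring
  · intro y
    have e : ∀ i j, y i * (Matrix.vecMulVec x x) i j * y j = (y i * x i) * (y j * x j) := by
      intro i j; simp [Matrix.vecMulVec_apply]; ring
    calc (0:ℝ) ≤ (∑ i, y i * x i) * (∑ j, y j * x j) := mul_self_nonneg _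
      _ = ∑ i, ∑ j, y i * (Matrix.vecMulVec x x) i j * y j := by
          rw [Fintype.sum_mul_sum]
          exact Finset.sum_congr rfl fun i _ => Finset.sum_congr rfl fun j _ => (e i j).symm

/-- The cone `L - PSD` used for the separation argument. -/
def Cone (G : SimpleGraph V) : Set (Matrix V V ℝ) :=
  {M | ∃ Λ : Matrix V V ℝ, (∀ i j, ¬ G.Adj i j → Λ i j = 0) ∧
    ∃ S : Matrix V V ℝ, S.PosSemidef ∧ M = Λ - S}

lemma cone_convex (G : SimpleGraph V) : Convex ℝ (Cone G) := by
  intro M₁ h₁ M₂ h₂ a b ha hb hab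
  obtain ⟨Λ₁, hΛ₁, S₁, hS₁, he₁⟩ := h₁
  obtain ⟨Λ₂, hΛ₂, S₂, hS₂, he₂⟩ := h₂
  refine ⟨a • Λ₁ + b • Λ₂, ?_, a • S₁ + b • S₂, (psd_smul hS₁ ha).add (psd_smul hS₂ hb), ?_⟩
  · intro i j hij
    simp [Matrix.add_apply, Matrix.smul_apply, hΛ₁ i j hij, hΛ₂ i j hij]
  · rw [he₁, he₂]
    rw [smul_sub, smul_sub]
    abel

lemma matrix_entry_tendsto {f : ℕ → Matrix V V ℝ} {A : Matrix V V ℝ}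
    (h : Tendsto f atTop (nhds A)) (i j : V) :
    Tendsto (fun n => f n i j) atTop (nhds (A i j)) := by
  exact ((continuous_apply j).comp (continuous_apply i)).continuousAt.tendsto.comp h

lemma cone_isClosed [Nonempty V] (G : SimpleGraph V) : IsClosed (Cone G) := by
  haveI : SequentialSpace (Matrix V V ℝ) := (inferInstance : SequentialSpace (V → V → ℝ))
  haveI : ProperSpace (Matrix V V ℝ) := (inferInstance : ProperSpace (V → V → ℝ))
  apply IsSeqClosed.isClosed
  intro f M hf hlim
  choose Λ hΛ S hS heq using hf
  -- diagonal entries of S are bounded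
  have hdiagseq : ∀ i : V, ∀ n, S n i i = - f n i i := by
    intro i n
    have := congrFun (congrFun (heq n) i) i
    rw [Matrix.sub_apply] at this
    rw [hΛ n i i (G.irrefl)] at this
    linarith
  have hbdd : ∀ i : V, ∃ b : ℝ, ∀ n, S n i i ≤ b := by
    intro i
    have : Tendsto (fun n => S n i i) atTop (nhds (- M i i)) := by
      have h1 := (matrix_entry_tendsto hlim i i).neg
      simpa [hdiagseq i] using h1
    obtain ⟨b, hb⟩ := this.bddAbove_range
    exact ⟨b, fun n => hb ⟨n, rfl⟩⟩
  choose b hb using hbdd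
  obtain ⟨i₀⟩ := ‹Nonempty V›
  set D : ℝ := Finset.univ.sup' ⟨i₀, Finset.mem_univ i₀⟩ b with hD
  have hbD : ∀ i, b i ≤ D := fun i => Finset.le_sup' b (Finset.mem_univ i)
  have hD0 : 0 ≤ D := le_trans (psd_diag (hS 0) i₀) (le_trans (hb i₀ 0) (hbD i₀))
  have hSentry : ∀ n i j, |S n i j| ≤ D := by
    intro n i j
    have h1 := psd_entry_bound (hS n) i j
    have h2 := le_trans (hb i n) (hbD i)
    have h3 := le_trans (hb j n) (hbD j)
    linarith
  have hSnorm : ∀ n, S n ∈ Metric.closedBall (0 : Matrix V V ℝ) D := by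
    intro n
    rw [Metric.mem_closedBall, dist_zero_right]
    rw [Matrix.norm_le_iff hD0]
    intro i j
    simpa [Real.norm_eq_abs] using hSentry n i j
  obtain ⟨a, -, φ, hφ, hconv⟩ :=
    tendsto_subseq_of_bounded Metric.isBounded_closedBall hSnorm
  have hfφ : Tendsto (fun n => f (φ n)) atTop (nhds M) := hlim.comp hφ.tendsto_atTop
  have eS : ∀ i j, Tendsto (fun n => S (φ n) i j) atTop (nhds (a i j)) :=
    fun i j => matrix_entry_tendsto hconv i j
  have eF : ∀ i j, Tendsto (fun n => f (φ n) i j) atTop (nhds (M i j)) :=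
    fun i j => matrix_entry_tendsto hfφ i j
  have hapsd : a.PosSemidef := by
    apply psd_of_quad
    · intro i j
      exact tendsto_nhds_unique (eS j i)
        ((eS i j).congr (fun n => (psd_sym (hS (φ n)) i j).symm))
    · intro x
      have hq : Tendsto (fun n => ∑ i, ∑ j, x i * S (φ n) i j * x j) atTop
          (nhds (∑ i, ∑ j, x i * a i j * x j)) := by
        refine tendsto_finset_sum _ fun i _ => tendsto_finset_sum _ fun j _ => ?_
        exact (((eS i j).const_mul (x i)).mul_const (x j)).congr (fun n => by ring)
      exact ge_of_tendsto hq (Eventually.of_forall fun n => psd_quad (hS (φ n)) x)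
  refine ⟨M + a, ?_, a, hapsd, by abel⟩
  intro i j hij
  have h1 : Tendsto (fun n => Λ (φ n) i j) atTop (nhds (M i j + a i j)) := by
    have := (eF i j).add (eS i j)
    refine this.congr fun n => ?_
    have := congrFun (congrFun (heq (φ n)) i) j
    rw [Matrix.sub_apply] at this
    linarith
  have h2 : Tendsto (fun n => Λ (φ n) i j) atTop (nhds 0) := by
    simpa [hΛ _ i j hij] using (tendsto_const_nhds : Tendsto (fun _ : ℕ => (0:ℝ)) atTop (nhds 0))
  exact (tendsto_nhds_unique h1 h2)

lemma dual_exists [Nonempty V] (G : SimpleGraph V) {θ ε : ℝ}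
    (hθ : ∀ v ∈ Feas G, v ≤ θ) (hε : 0 < ε) :
    ∃ Λ : Matrix V V ℝ, (∀ i j, ¬ G.Adj i j → Λ i j = 0) ∧
      ((θ + ε) • (1 : Matrix V V ℝ) - Matrix.of (fun _ _ => (1:ℝ)) + Λ).PosSemidef := by
  set J : Matrix V V ℝ := Matrix.of (fun _ _ => (1:ℝ)) with hJ
  set p : Matrix V V ℝ := J - (θ + ε) • 1 with hp'
  by_cases hp : p ∈ Cone G
  · obtain ⟨Λ, hΛ, S, hS, heq⟩ := hp
    refine ⟨Λ, hΛ, ?_⟩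
    have h3 : (θ + ε) • (1 : Matrix V V ℝ) - J + Λ = S := by
      have h2 : J - (θ + ε) • (1 : Matrix V V ℝ) = Λ - S := heq
      have h4 : S = Λ - (J - (θ + ε) • (1 : Matrix V V ℝ)) := by rw [h2]; abel
      rw [h4]; abel
    rw [h3]; exact hS
  · haveI : LocallyConvexSpace ℝ (Matrix V V ℝ) :=
      (inferInstance : LocallyConvexSpace ℝ (V → V → ℝ))
    obtain ⟨g, u, hgu, hup⟩ := geometric_hahn_banach_closed_point (cone_convex G)
      (cone_isClosed G) hp
    have h0 : (0 : Matrix V V ℝ) ∈ Cone G :=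
      ⟨0, fun i j _ => rfl, 0, Matrix.PosSemidef.zero, by simp⟩
    have hu0 : 0 < u := by simpa using hgu 0 h0
    have hgPSD : ∀ S : Matrix V V ℝ, S.PosSemidef → 0 ≤ g S := by
      intro S hS
      by_contra hneg
      push_neg at hneg
      set c : ℝ := (u + 1) / (-(g S)) with hc
      have hc0 : 0 ≤ c := by
        apply div_nonneg (by linarith) (by linarith)
      have hmem : -(c • S) ∈ Cone G :=
        ⟨0, fun _ _ _ => rfl, c • S, psd_smul hS hc0, by simp⟩
      have hne : g S ≠ 0 := ne_of_lt hneg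
      have this2 := hgu _ hmem
      have hcs : c * g S = -(u+1) := by
        rw [hc, div_mul_eq_mul_div, mul_div_assoc, div_neg, div_self hne]; ring
      rw [map_neg, g.map_smul, smul_eq_mul, hcs] at this2
      linarith
    have hgL : ∀ Λ : Matrix V V ℝ, (∀ i j, ¬ G.Adj i j → Λ i j = 0) → g Λ = 0 := by
      intro Λ hΛmem
      by_contra hne
      set c : ℝ := (u + 1) / g Λ with hc
      have hmem : c • Λ ∈ Cone G :=
        ⟨c • Λ, fun i j hij => by simp [Matrix.smul_apply, hΛmem i j hij], 0,
          Matrix.PosSemidef.zero, by simp⟩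
      have this2 := hgu _ hmem
      rw [g.map_smul, smul_eq_mul, hc, div_mul_cancel₀ _ hne] at this2
      linarith
    set Z : Matrix V V ℝ := Matrix.of (fun i j => g (Matrix.single i j 1)) with hZ
    have hrep : ∀ M : Matrix V V ℝ, g M = ∑ i, ∑ j, M i j * Z i j := by
      intro M
      conv_lhs => rw [Matrix.matrix_eq_sum_single M]
      rw [map_sum]
      refine Finset.sum_congr rfl fun i _ => ?_
      rw [map_sum]
      refine Finset.sum_congr rfl fun j _ => ?_
      rw [show Matrix.single i j (M i j) = (M i j) • Matrix.single i j 1 by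
        rw [Matrix.smul_single]; simp]
      rw [g.map_smul, smul_eq_mul, hZ]
      simp
    set Z' : Matrix V V ℝ := Matrix.of (fun i j => (Z i j + Z j i) / 2) with hZ'
    have hZ'sym : ∀ i j, Z' j i = Z' i j := by
      intro i j; simp [hZ', Matrix.of_apply]; ring
    have hswap : ∀ x : V → ℝ, ∑ i, ∑ j, (x i * x j) * Z j i = ∑ i, ∑ j, (x i * x j) * Z i j := by
      intro x
      rw [Finset.sum_comm]
      exact Finset.sum_congr rfl fun i _ => Finset.sum_congr rfl fun j _ => by ring
    have hquadZ : ∀ x : V → ℝ, ∑ i, ∑ j, x i * Z' i j * x j = g (Matrix.vecMulVec x x) := by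
      intro x
      rw [hrep]
      have e1 : ∀ i j, x i * Z' i j * x j
          = ((x i * x j) * Z i j) / 2 + ((x i * x j) * Z j i) / 2 := by
        intro i j; simp [hZ', Matrix.vecMulVec_apply, Matrix.of_apply]; ring
      have e2 : ∀ i j, Matrix.vecMulVec x x i j * Z i j = (x i * x j) * Z i j := by
        intro i j; simp [Matrix.vecMulVec_apply]
      calc ∑ i, ∑ j, x i * Z' i j * x j
          = ∑ i, ∑ j, (((x i * x j) * Z i j) / 2 + ((x i * x j) * Z j i) / 2) :=
            Finset.sum_congr rfl fun i _ => Finset.sum_congr rfl fun j _ => e1 i j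
        _ = (∑ i, ∑ j, (x i * x j) * Z i j) / 2 + (∑ i, ∑ j, (x i * x j) * Z j i) / 2 := by
            simp [Finset.sum_add_distrib, Finset.sum_div]
        _ = ∑ i, ∑ j, (x i * x j) * Z i j := by rw [hswap x]; ring
        _ = ∑ i, ∑ j, Matrix.vecMulVec x x i j * Z i j :=
            Finset.sum_congr rfl fun i _ => Finset.sum_congr rfl fun j _ => (e2 i j).symm
    have hZ'psd : Z'.PosSemidef := by
      apply psd_of_quad _ hZ'sym
      intro x
      rw [hquadZ x]
      exact hgPSD _ (vecMulVec_psd x)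
    have hZ'edge : ∀ i j, G.Adj i j → Z' i j = 0 := by
      intro i j hadj
      have ebasis : ∀ k l : V, G.Adj k l → g (Matrix.single k l 1) = 0 := by
        intro k l hkl
        apply hgL
        intro k' l' hk'l'
        by_cases h : k = k' ∧ l = l'
        · exact absurd (h.1 ▸ h.2 ▸ hkl) hk'l'
        · simp [Matrix.single, Matrix.of_apply]
          intro h1 h2; exact absurd ⟨h1, h2⟩ h
      have e1 : Z i j = 0 := ebasis i j hadj
      have e2 : Z j i = 0 := ebasis j i (G.adj_symm hadj)
      simp [hZ', Matrix.of_apply, e1, e2]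
    -- trace positivity and contradiction
    have hfp : 0 < g p := lt_trans hu0 hup
    have hpe : ∀ i j : V, p i j = 1 - (θ + ε) * (if i = j then 1 else 0) := by
      intro i j
      simp [hp', hJ, Matrix.sub_apply, Matrix.smul_apply, Matrix.one_apply, Matrix.of_apply,
        smul_eq_mul, mul_ite]
    have hgp : g p = (∑ i, ∑ j, Z i j) - (θ + ε) * (∑ i, Z i i) := by
      rw [hrep]
      have e1 : ∀ i j, p i j * Z i j
          = Z i j - (θ + ε) * (if i = j then Z i j else 0) := by
        intro i j; rw [hpe i j]; by_cases h : i = j <;> simp [h] <;> ring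
      calc ∑ i, ∑ j, p i j * Z i j
          = ∑ i, ∑ j, (Z i j - (θ + ε) * (if i = j then Z i j else 0)) :=
            Finset.sum_congr rfl fun i _ => Finset.sum_congr rfl fun j _ => e1 i j
        _ = (∑ i, ∑ j, Z i j) - (θ + ε) * (∑ i, ∑ j, if i = j then Z i j else 0) := by
            simp [Finset.sum_sub_distrib, Finset.mul_sum]
        _ = (∑ i, ∑ j, Z i j) - (θ + ε) * (∑ i, Z i i) := by
            congr 1
            congr 1
            exact Finset.sum_congr rfl fun i _ => by simp [Finset.sum_ite_eq' Finset.univ i]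
    have hsumZZ' : ∑ i, ∑ j, Z' i j = ∑ i, ∑ j, Z i j := by
      have : ∀ i j, Z' i j = (Z i j) / 2 + (Z j i) / 2 := by
        intro i j; simp [hZ', Matrix.of_apply]; ring
      calc ∑ i, ∑ j, Z' i j = ∑ i, ∑ j, ((Z i j) / 2 + (Z j i) / 2) :=
            Finset.sum_congr rfl fun i _ => Finset.sum_congr rfl fun j _ => this i j
        _ = (∑ i, ∑ j, Z i j) / 2 + (∑ i, ∑ j, Z j i) / 2 := by
            simp [Finset.sum_add_distrib, Finset.sum_div]
        _ = ∑ i, ∑ j, Z i j := by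
            rw [show ∑ i, ∑ j, Z j i = ∑ i, ∑ j, Z i j from Finset.sum_comm]; ring
    have hdiagZZ' : ∀ i, Z' i i = Z i i := by
      intro i; simp [hZ', Matrix.of_apply]
    set τ : ℝ := ∑ i, Z' i i with hτ
    have hτ0 : 0 ≤ τ := Finset.sum_nonneg fun i _ => psd_diag hZ'psd i
    have hgp' : g p = (∑ i, ∑ j, Z' i j) - (θ + ε) * τ := by
      rw [hgp, hsumZZ', hτ]
      congr 2
      exact (Finset.sum_congr rfl fun i _ => (hdiagZZ' i).symm)
    have hτpos : 0 < τ := by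
      rcases lt_or_eq_of_le hτ0 with h | h
      · exact h
      · exfalso
        have hdiag0 : ∀ i, Z' i i = 0 := by
          intro i
          have := Finset.sum_eq_zero_iff_of_nonneg
            (fun i (_ : i ∈ Finset.univ) => psd_diag hZ'psd i)
          rw [← hτ, ← h] at this
          exact this.mp rfl i (Finset.mem_univ i)
        have hentry0 : ∀ i j, Z' i j = 0 := by
          intro i j
          have := psd_entry_bound hZ'psd i j
          rw [hdiag0 i, hdiag0 j] at this
          have habs : |Z' i j| ≤ 0 := by linarith
          exact abs_eq_zero.mp (le_antisymm habs (abs_nonneg _))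
        have : g p = 0 := by
          rw [hgp']
          simp [hentry0, ← h]
        linarith
    -- build the feasible solution and contradict hθ
    set X : Matrix V V ℝ := τ⁻¹ • Z' with hX
    have hXfeas : (∑ i, ∑ j, X i j) ∈ Feas G := by
      refine ⟨X, psd_smul hZ'psd (inv_nonneg.mpr hτ0), ?_, ?_, rfl⟩
      · have htr : Z'.trace = τ := by
          rw [Matrix.trace, hτ]
          rfl
        rw [hX, Matrix.trace_smul, htr]
        exact inv_smul_eq_iff₀ (ne_of_gt hτpos) |>.mpr (by rw [smul_eq_mul, mul_one])
      · intro i j hadj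
        simp [hX, Matrix.smul_apply, hZ'edge i j hadj]
    have hXval : ∑ i, ∑ j, X i j = τ⁻¹ * ∑ i, ∑ j, Z' i j := by
      simp [hX, Matrix.smul_apply, smul_eq_mul, Finset.mul_sum]
    have hle := hθ _ hXfeas
    rw [hXval] at hle
    have hgt : (θ + ε) * τ < ∑ i, ∑ j, Z' i j := by linarith [hgp' ▸ hfp]
    have : θ + ε < τ⁻¹ * ∑ i, ∑ j, Z' i j := by
      have h2 := mul_lt_mul_of_pos_left hgt (inv_pos.mpr hτpos)
      have h3 : τ⁻¹ * ((θ + ε) * τ) = θ + ε := by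
        field_simp
      rwa [h3] at h2
    linarith



lemma key_ineq (G : SimpleGraph V) {t s : ℝ} (ht : 1 ≤ t) (hs : 1 ≤ s)
    {Λ₁ Λ₂ : Matrix V V ℝ}
    (hΛ₁ : ∀ i j, ¬ G.Adj i j → Λ₁ i j = 0)
    (hΛ₂ : ∀ i j, ¬ Gᶜ.Adj i j → Λ₂ i j = 0)
    (h₁ : (t • (1 : Matrix V V ℝ) - Matrix.of (fun _ _ => (1:ℝ)) + Λ₁).PosSemidef)
    (h₂ : (s • (1 : Matrix V V ℝ) - Matrix.of (fun _ _ => (1:ℝ)) + Λ₂).PosSemidef) :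
    (Fintype.card V : ℝ) ≤ t * s := by
  have ht0 : (0:ℝ) < t := lt_of_lt_of_le one_pos ht
  have hs0 : (0:ℝ) < s := lt_of_lt_of_le one_pos hs
  set r₁ := Real.sqrt t with hr₁
  set r₂ := Real.sqrt s with hr₂
  have hr₁sq : r₁ ^ 2 = t := Real.sq_sqrt ht0.le
  have hr₂sq : r₂ ^ 2 = s := Real.sq_sqrt hs0.le
  have hr₁0 : 0 < r₁ := Real.sqrt_pos.mpr ht0
  have hr₂0 : 0 < r₂ := Real.sqrt_pos.mpr hs0
  set S₁ := t • (1 : Matrix V V ℝ) - Matrix.of (fun _ _ => (1:ℝ)) + Λ₁ with hS₁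
  set S₂ := s • (1 : Matrix V V ℝ) - Matrix.of (fun _ _ => (1:ℝ)) + Λ₂ with hS₂
  have hS₁e : ∀ i j, S₁ i j = t * (if i = j then 1 else 0) - 1 + Λ₁ i j := by
    intro i j
    simp [hS₁, Matrix.sub_apply, Matrix.add_apply, Matrix.smul_apply, Matrix.one_apply,
      smul_eq_mul, mul_ite]
  have hS₂e : ∀ i j, S₂ i j = s * (if i = j then 1 else 0) - 1 + Λ₂ i j := by
    intro i j
    simp [hS₂, Matrix.sub_apply, Matrix.add_apply, Matrix.smul_apply, Matrix.one_apply,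
      smul_eq_mul, mul_ite]
  set R := (border S₁ r₁) ⊙ (border S₂ r₂) with hR
  have hRpsd : R.PosSemidef := hadamard_psd (border_psd _ h₁ _) (border_psd _ h₂ _)
  have hRd : ∀ i : V, R (some i) (some i) = t * s := by
    intro i
    have e₁ : Λ₁ i i = 0 := hΛ₁ i i (G.irrefl)
    have e₂ : Λ₂ i i = 0 := hΛ₂ i i (Gᶜ.irrefl)
    simp [hR, Matrix.hadamard_apply, border, hS₁e, hS₂e, e₁, e₂]
  have hRo : ∀ i j : V, i ≠ j → R (some i) (some j) = 0 := by
    intro i j hij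
    by_cases hadj : G.Adj i j
    · have e₂ : Λ₂ i j = 0 := hΛ₂ i j (by simp [SimpleGraph.compl_adj, hadj])
      simp [hR, Matrix.hadamard_apply, border, hS₂e, e₂, hij]
    · have e₁ : Λ₁ i j = 0 := hΛ₁ i j hadj
      simp [hR, Matrix.hadamard_apply, border, hS₁e, e₁, hij]
  have hRnn : R none none = t * s := by
    simp [hR, Matrix.hadamard_apply, border, hr₁sq, hr₂sq]
  have hRns : ∀ j : V, R none (some j) = r₁ * r₂ := by
    intro j; simp [hR, Matrix.hadamard_apply, border]
  have hRsn : ∀ i : V, R (some i) none = r₁ * r₂ := by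
    intro i; simp [hR, Matrix.hadamard_apply, border]
  -- the Bessel-type vector
  set c : ℝ := (r₁ * r₂)⁻¹ with hc
  set x : Option V → ℝ := fun o => Option.elim o (-1) (fun _ => c) with hx
  have hq := psd_quad hRpsd x
  rw [sum_option' (fun k => ∑ l, x k * R k l * x l)] at hq
  have e_none : ∑ l : Option V, x none * R none l * x l
      = t * s - (Fintype.card V : ℝ) * (r₁ * r₂ * c) := by
    rw [sum_option' (fun l => x none * R none l * x l)]
    simp only [hx, Option.elim_none, Option.elim_some, hRnn, hRns]
    rw [Finset.sum_const, Finset.card_univ, nsmul_eq_mul]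
    ring
  have e_some : ∀ i : V, ∑ l : Option V, x (some i) * R (some i) l * x l
      = -(c * (r₁ * r₂)) + c ^ 2 * (t * s) := by
    intro i
    rw [sum_option' (fun l => x (some i) * R (some i) l * x l)]
    have : ∑ l : V, x (some i) * R (some i) (some l) * x (some l) = c ^ 2 * (t * s) := by
      rw [Finset.sum_eq_single_of_mem i (Finset.mem_univ i)]
      · simp only [hx, Option.elim_none, Option.elim_some, hRd]; ring
      · intro j _ hji
        rw [hRo i j (Ne.symm hji)]; ring
    rw [this]
    simp only [hx, Option.elim_none, Option.elim_some, hRsn]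
    ring
  rw [e_none, Finset.sum_congr rfl (fun i _ => e_some i), Finset.sum_const] at hq
  simp only [Finset.card_univ, nsmul_eq_mul] at hq
  have hrr : r₁ * r₂ * c = 1 := by
    rw [hc]; field_simp
  have hcc : c ^ 2 * (t * s) = 1 := by
    rw [hc, ← hr₁sq, ← hr₂sq]; field_simp
  rw [hrr] at hq
  rw [hcc] at hq  -- hq : 0 ≤ t*s - n*1 + n*(-(c*(r₁r₂)) + 1)?
  nlinarith [hq, hrr]

end LovaszThetaProof

open LovaszThetaProof

/-- The Lovász theta function of a graph, as the optimal value of the SDP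
max { <J, X> : X ⪰ 0, tr X = 1, X_{ij} = 0 for all edges {i,j} }. -/
noncomputable def lovaszTheta {V : Type} [Fintype V] (G : SimpleGraph V) : ℝ :=
  sSup {t | ∃ X : Matrix V V ℝ, X.PosSemidef ∧ X.trace = 1 ∧
    (∀ i j, G.Adj i j → X i j = 0) ∧ t = ∑ i, ∑ j, X i j}

theorem stmt5 {V : Type} [Fintype V] (G : SimpleGraph V) :
    (Fintype.card V : ℝ) ≤ lovaszTheta G * lovaszTheta Gᶜ := by
  have hLT : ∀ (H : SimpleGraph V), lovaszTheta H = sSup (Feas H) := fun H => rfl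
  cases isEmpty_or_nonempty V with
  | inl h =>
    have hempty : ∀ H : SimpleGraph V, Feas H = ∅ := by
      intro H
      ext t
      simp only [Feas, Set.mem_setOf_eq, Set.mem_empty_iff_false, iff_false]
      rintro ⟨X, -, htr, -, -⟩
      rw [Matrix.trace] at htr
      simp [Finset.univ_eq_empty] at htr
    rw [hLT, hLT, hempty, hempty, Real.sSup_empty]
    simp
  | inr h =>
    rw [hLT, hLT]
    set θ₁ := sSup (Feas G) with hθ₁
    set θ₂ := sSup (Feas Gᶜ) with hθ₂
    have hbdd : ∀ H : SimpleGraph V, BddAbove (Feas H) :=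
      fun H => ⟨(Fintype.card V : ℝ), fun v hv => feas_le_card H hv⟩
    have hub₁ : ∀ v ∈ Feas G, v ≤ θ₁ := fun v hv => le_csSup (hbdd G) hv
    have hub₂ : ∀ v ∈ Feas Gᶜ, v ≤ θ₂ := fun v hv => le_csSup (hbdd Gᶜ) hv
    have h1₁ : (1:ℝ) ≤ θ₁ := hub₁ 1 (one_mem_feas G)
    have h1₂ : (1:ℝ) ≤ θ₂ := hub₂ 1 (one_mem_feas Gᶜ)
    have key : ∀ ε : ℝ, 0 < ε → (Fintype.card V : ℝ) ≤ (θ₁ + ε) * (θ₂ + ε) := by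
      intro ε hε
      obtain ⟨Λ₁, hΛ₁, hP₁⟩ := dual_exists G hub₁ hε
      obtain ⟨Λ₂, hΛ₂, hP₂⟩ := dual_exists Gᶜ hub₂ hε
      exact key_ineq G (by linarith) (by linarith) hΛ₁ hΛ₂ hP₁ hP₂
    refine le_of_forall_pos_le_add ?_
    intro ε hε
    have hden : (0:ℝ) < θ₁ + θ₂ + 1 := by linarith
    set δ := min 1 (ε / (θ₁ + θ₂ + 1)) with hδ
    have hδpos : 0 < δ := lt_min one_pos (div_pos hε hden)
    have hδ1 : δ ≤ 1 := min_le_left _ _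
    have hδ2 : δ ≤ ε / (θ₁ + θ₂ + 1) := min_le_right _ _
    have hk := key δ hδpos
    have h4 : δ * (θ₁ + θ₂ + 1) ≤ ε := by
      rw [← div_mul_cancel₀ ε (ne_of_gt hden)]
      exact mul_le_mul_of_nonneg_right hδ2 (le_of_lt hden)
    nlinarith [hk, hδ1, hδpos, h4, mul_le_mul_of_nonneg_left hδ1 (le_of_lt hδpos)]
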